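/- Let x ≥ 0, ε > 0, λ > 0, and define h : ℝ → ℝ by h(a) = ½(a − x)² + λ·log(a + ε) and Δ = (x − ε)² − 4(λ − x·ε). If Δ ≤ 0, then h is monotone nondecreasing on [0, ∞); in particular h(0) ≤ h(a) for every a ≥ 0, so 0 is a global minimizer of h over [0, ∞). -/

import Mathlib

noncomputable section

/-- Scalar QLSVT minimization, nonpositive-discriminant case: if
`Δ = (x - ε)² - 4(λ - xε) ≤ 0` then `h(a) = ½(a - x)² + λ log(a + ε)` is monotone
nondecreasing on `[0, ∞)`, so `0` is a global minimizer of `h` over `[0, ∞)`. -/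
theorem qlsvt_scalar_nonpos (x ε lam : ℝ) (hx : 0 ≤ x) (hε : 0 < ε) (hlam : 0 < lam)
    (h : ℝ → ℝ) (hh : ∀ a, h a = (1 / 2) * (a - x) ^ 2 + lam * Real.log (a + ε))
    (Δ : ℝ) (hΔ : Δ = (x - ε) ^ 2 - 4 * (lam - x * ε)) (hneg : Δ ≤ 0) :
    MonotoneOn h (Set.Ici 0) ∧ ∀ a : ℝ, 0 ≤ a → h 0 ≤ h a := by
  have hd : ∀ a : ℝ, 0 ≤ a →
      HasDerivAt h ((a - x) + lam * (1 / (a + ε))) a := by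
    intro a ha
    have hpos : a + ε > 0 := by linarith
    have h1 : HasDerivAt (fun a : ℝ => (1 / 2) * (a - x) ^ 2) (a - x) a := by
      have := ((hasDerivAt_id a).sub_const x).pow 2
      have := this.const_mul (1 / 2 : ℝ)
      convert this using 1
      · rfl
      · rfl
      · rfl
      · simp
    have h2 : HasDerivAt (fun a : ℝ => lam * Real.log (a + ε)) (lam * (1 / (a + ε))) a := by
      have := (Real.hasDerivAt_log (ne_of_gt hpos)).comp a
        ((hasDerivAt_id a).add_const ε)
      have := this.const_mul lam
      convert this using 1
      · rfl
      · rfl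
      · rfl
      · ring
    exact (h1.add h2).congr_of_eventuallyEq
      (Filter.Eventually.of_forall fun b => hh b)
  have key : ∀ a : ℝ, 0 ≤ a → 0 ≤ (a - x) + lam * (1 / (a + ε)) := by
    intro a ha
    have hpos : (0:ℝ) < a + ε := by linarith
    have hnum : 0 ≤ (a - x) * (a + ε) + lam := by
      nlinarith [sq_nonneg (2 * a + ε - x)]
    have : (a - x) + lam * (1 / (a + ε)) = ((a - x) * (a + ε) + lam) / (a + ε) := by
      field_simp
    rw [this]
    exact div_nonneg hnum hpos.le
  have hmono : MonotoneOn h (Set.Ici 0) := by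
    have hcont : ContinuousOn h (Set.Ici 0) := fun a ha =>
      (hd a ha).continuousAt.continuousWithinAt
    apply monotoneOn_of_deriv_nonneg (convex_Ici 0) hcont
    · intro a ha
      rw [interior_Ici] at ha
      exact (hd a (le_of_lt ha)).differentiableAt.differentiableWithinAt
    · intro a ha
      rw [interior_Ici] at ha
      rw [(hd a (le_of_lt ha)).deriv]
      exact key a (le_of_lt ha)
  exact ⟨hmono, fun a ha => hmono Set.self_mem_Ici ha ha⟩
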